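/- Let T be a spanning arborescence of G=(V,A) rooted at r and let (s,t) ∈ R with t lying on the unique path from r to s in T. Then the inequality ∑_{(i,k)∈A : i∈V_s∖S, k∈S} x(i,k) ≥ 1 is violated by the indicator x of T for the set S consisting of all vertices on the subpath of T from t to s (inclusive) intersected with V_s, where V_s = {i : (s,i) ∉ R}; in particular the indicator of any precedence-violating arborescence fails some constraint (3). -/

import Mathlib

def IsPathIn {V : Type*} (T : Set (V × V)) (r j : V) (p : List V) : Prop :=
  p.head? = some r ∧ p.getLast? = some j ∧ p.Chain' (fun a b => (a, b) ∈ T)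

def IsSpanningArborescence {V : Type*} (T : Set (V × V)) (r : V) : Prop :=
  (∀ j : V, j ≠ r → ∃! i : V, (i, j) ∈ T) ∧ (∀ i : V, (i, r) ∉ T) ∧
    ∀ j : V, ∃! p : List V, IsPathIn T r j p

/-- if the spanning arborescence `T` violates the precedence
`(s,t) ∈ R` (i.e. `t` lies on the unique path `p` from `r` to `s`), then the
indicator of `T` violates the connectivity inequality (3) for the set `S`
consisting of the vertices of the subpath of `p` from `t` to `s` (inclusive)
intersected with `V_s`: the corresponding cut sum is `0 < 1`. -/
theorem stmt15 {V : Type*} [Fintype V] [DecidableEq V]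
    (A T : Finset (V × V)) (R : Finset (V × V)) (r : V)
    (hT : T ⊆ A) (hr : ∀ i : V, (i, r) ∉ A)
    (harb : IsSpanningArborescence (↑T) r)
    (hirr : ∀ q ∈ R, q.1 ≠ q.2)
    (s t : V) (hst : (s, t) ∈ R)
    (p : List V) (hp : IsPathIn (↑T) r s p) (htp : t ∈ p) :
    ∃ S : Finset V,
      S = (p.drop (p.idxOf t)).toFinset ∩ Finset.univ.filter (fun i => (s, i) ∉ R) ∧
      S ⊆ (Finset.univ.filter (fun i => (s, i) ∉ R)).erase r ∧ s ∈ S ∧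
      ∑ a ∈ A.filter (fun a =>
          a.1 ∈ Finset.univ.filter (fun i => (s, i) ∉ R) ∧ a.1 ∉ S ∧ a.2 ∈ S),
        (if a ∈ T then (1 : ℝ) else 0) < 1 := by
  classical
  obtain ⟨hhead, hlast, hchain⟩ := hp
  set n := p.idxOf t with hn
  have hne : p ≠ [] := by
    intro h; rw [h] at hhead; simp at hhead
  have hnp : n < p.length := List.idxOf_lt_length_iff.mpr htp
  have hpn : p[n] = t := List.getElem_idxOf hnp
  have hp0 : p[0]'(List.length_pos_iff.mpr hne) = r := by
    rw [List.head?_eq_head hne] at hhead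
    simpa [List.head_eq_getElem] using Option.some_injective _ hhead
  have hps : p[p.length - 1]'(by omega) = s := by
    rw [List.getLast?_eq_getLast hne] at hlast
    simpa [List.getLast_eq_getElem] using Option.some_injective _ hlast
  -- chain property via getElem
  have hstep : ∀ m : ℕ, (h : m + 1 < p.length) →
      (p[m]'(by omega), p[m+1]'h) ∈ T := by
    intro m h
    have := List.isChain_iff_getElem.mp hchain m (by omega)
    simpa [List.get_eq_getElem] using this
  -- membership in drop characterization
  have hdropmem : ∀ k : V, k ∈ p.drop n ↔ ∃ m : ℕ, n ≤ m ∧ ∃ h : m < p.length, p[m] = k := by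
    intro k
    constructor
    · intro hk
      obtain ⟨j, hj, hjk⟩ := List.getElem_of_mem hk
      refine ⟨n + j, by omega, ?_, ?_⟩
      · have := (List.length_drop (i := n) (l := p)) ▸ hj; omega
      · rw [← hjk]; exact (List.getElem_drop ..).symm
    · rintro ⟨m, hm, h, rfl⟩
      have : p[m] = (p.drop n)[m - n]'(by rw [List.length_drop]; omega) := by
        rw [List.getElem_drop]; congr 1; omega
      rw [this]; exact List.getElem_mem _
  have hstep2 : ∀ m : ℕ, 0 < m → (h : m < p.length) →
      (p[m-1]'(by omega), p[m]'h) ∈ T := by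
    intro m hm h
    obtain ⟨j, rfl⟩ : ∃ j, m = j + 1 := ⟨m - 1, by omega⟩
    simpa using hstep j h
  have htVs : ¬ (s, t) ∉ R := by simp [hst]
  -- t ∉ S's second component; s ∈ drop
  have hsdrop : s ∈ p.drop n := by
    rw [hdropmem]
    exact ⟨p.length - 1, by omega, by omega, hps⟩
  have hss : (s, s) ∉ R := fun h => hirr _ h rfl
  refine ⟨_, rfl, ?_, ?_, ?_⟩
  · -- subset of erase r
    intro x hx
    simp only [Finset.mem_inter, List.mem_toFinset, Finset.mem_filter, Finset.mem_univ,
      true_and] at hx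
    obtain ⟨hxd, hxR⟩ := hx
    rw [Finset.mem_erase]
    refine ⟨?_, by simp [hxR]⟩
    intro hxr
    obtain ⟨m, hnm, h, hpm⟩ := (hdropmem x).mp hxd
    rcases Nat.eq_zero_or_pos m with rfl | hm
    · -- then n = 0, so t = p[0] = r = x, contradiction with (s,t) ∈ R
      have hn0 : n = 0 := by omega
      have : x = t := by rw [← hpm, ← hpn]; (congr 1; omega)
      exact htVs (this ▸ hxR)
    · have := hstep2 m hm h
      rw [hpm, hxr] at this
      exact hr _ (hT this)
  · -- s ∈ S
    simp only [Finset.mem_inter, List.mem_toFinset, Finset.mem_filter, Finset.mem_univ]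
    exact ⟨hsdrop, trivial, hss⟩
  · -- the sum is zero
    have : ∀ a ∈ A.filter (fun a =>
        a.1 ∈ Finset.univ.filter (fun i => (s, i) ∉ R) ∧
        a.1 ∉ (p.drop n).toFinset ∩ Finset.univ.filter (fun i => (s, i) ∉ R) ∧
        a.2 ∈ (p.drop n).toFinset ∩ Finset.univ.filter (fun i => (s, i) ∉ R)),
        (if a ∈ T then (1 : ℝ) else 0) = 0 := by
      rintro ⟨i, k⟩ ha
      simp only [Finset.mem_filter, Finset.mem_inter, List.mem_toFinset, Finset.mem_univ,
        true_and] at ha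
      obtain ⟨_, hiVs, hiS, hkd, hkVs⟩ := ha
      rw [if_neg]
      intro hikT
      -- k ≠ t since t ∉ V_s
      have hkt : k ≠ t := by rintro rfl; exact htVs hkVs
      obtain ⟨m, hnm, h, hpm⟩ := (hdropmem k).mp hkd
      have hmn : n < m := by
        rcases Nat.lt_or_ge n m with h' | h'
        · exact h'
        · exfalso; apply hkt; rw [← hpm, ← hpn]; congr 1; omega
      -- k ≠ r
      have hkr : k ≠ r := by rintro rfl; exact hr _ (hT hikT)
      obtain ⟨u, huT, huniq⟩ := harb.1 k hkr
      have hprev : (p[m-1]'(by omega), k) ∈ T := by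
        have := hstep2 m (by omega) h
        rwa [hpm] at this
      have h1 : i = u := huniq i hikT
      have h2 : p[m-1]'(by omega) = u := huniq _ hprev
      have : i ∈ p.drop n := by
        rw [hdropmem]
        exact ⟨m - 1, by omega, by omega, by rw [h2, ← h1]⟩
      exact hiS ⟨this, hiVs⟩
    rw [Finset.sum_eq_zero this]
    norm_num
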